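/- Let G be a topological group which is not strongly amenable (its universal minimal proximal flow Π(G) is not a single point). If t ∈ G satisfies cl⟨Aut(G)t⟩ = G (the closed subgroup generated by the Aut(G)-orbit of t is all of G), then t does not act as the identity on Π(G). -/

import Mathlib

universe u v

def IsMinimalFlow (G X : Type*) [Group G] [TopologicalSpace X] [MulAction G X] : Prop :=
  ∀ x : X, Dense (Set.range fun g : G => g • x)

def IsProximalFlow (G X : Type*) [Group G] [TopologicalSpace X] [MulAction G X] : Prop :=
  ∀ x y : X, ∃ z : X, (z, z) ∈ closure (Set.range fun g : G => (g • x, g • y))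

def IsTopAut {G : Type*} [Group G] [TopologicalSpace G] (a : G ≃* G) : Prop :=
  Continuous a ∧ Continuous a.symm

def autOrbit (G : Type*) [Group G] [TopologicalSpace G] (t : G) : Set G :=
  {g : G | ∃ a : G ≃* G, IsTopAut a ∧ a t = g}

/-- The action of `G` on `X` twisted by an automorphism `a`. -/
def TwAction {G X : Type*} [Group G] [MulAction G X] (a : G ≃* G) : MulAction G X where
  smul g x := a g • x
  one_smul x := by show a 1 • x = x; simp
  mul_smul g h x := by show a (g * h) • x = a g • a h • x; simp [mul_smul]

theorem universal_minimal_proximal_effective_at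
    (G : Type u) (X : Type v) [Group G] [TopologicalSpace G] [IsTopologicalGroup G]
    [TopologicalSpace X] [CompactSpace X] [T2Space X]
    [MulAction G X] [ContinuousSMul G X]
    -- X is the universal minimal proximal flow Π(G)
    (hmin : IsMinimalFlow G X) (hprox : IsProximalFlow G X)
    (huniv : ∀ (Y : Type v) [TopologicalSpace Y] [CompactSpace Y] [T2Space Y]
      [MulAction G Y] [ContinuousSMul G Y], IsMinimalFlow G Y → IsProximalFlow G Y →
      ∃ f : X → Y, Continuous f ∧ Function.Surjective f ∧
        ∀ (g : G) (x : X), f (g • x) = g • f x)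
    -- G is not strongly amenable: Π(G) is not a single point
    (hnontriv : ∃ x y : X, x ≠ y)
    (t : G)
    (ht : (Subgroup.closure (autOrbit G t)).topologicalClosure = ⊤) :
    ∃ x : X, t • x ≠ x := by
  by_contra hc
  push_neg at hc
  -- every element of the Aut(G)-orbit of t acts trivially
  have key : ∀ g ∈ autOrbit G t, ∀ x : X, g • x = x := by
    rintro g ⟨a, ⟨hac, _⟩, rfl⟩
    have hcs : @ContinuousSMul G X (TwAction a).toSMul _ _ :=
      @ContinuousSMul.mk G X (TwAction a).toSMul _ _
        (show Continuous fun p : G × X => a p.1 • p.2 from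
          continuous_smul.comp ((hac.comp continuous_fst).prodMk continuous_snd))
    have hmin' : @IsMinimalFlow G X _ _ (TwAction a) := by
      intro x
      have h1 := hmin x
      rw [← Function.Surjective.range_comp a.surjective (fun g : G => g • x)] at h1
      exact h1
    have hprox' : @IsProximalFlow G X _ _ (TwAction a) := by
      intro x y
      have h1 := hprox x y
      rw [← Function.Surjective.range_comp a.surjective (fun g : G => (g • x, g • y))] at h1
      exact h1
    obtain ⟨f, _, hfs, hfe⟩ := @huniv X _ _ _ (TwAction a) hcs hmin' hprox'
    intro y
    obtain ⟨x, rfl⟩ := hfs y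
    have h2 : f (t • x) = a t • f x := hfe t x
    rw [hc x] at h2
    exact h2.symm
  -- the set of trivially acting elements is a closed subgroup
  set S : Subgroup G :=
    { carrier := {g : G | ∀ x : X, g • x = x}
      one_mem' := fun x => one_smul _ _
      mul_mem' := fun {g h} hg hh x => by rw [mul_smul, hh, hg]
      inv_mem' := fun {g} hg x => inv_smul_eq_iff.2 (hg x).symm } with hS
  have hSclosed : IsClosed (S : Set G) := by
    have : (S : Set G) = ⋂ x : X, {g : G | g • x = x} := by
      ext g; simp [hS, Set.mem_iInter]
    rw [this]
    exact isClosed_iInter fun x =>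
      isClosed_eq (continuous_id.smul continuous_const) continuous_const
  have hle : (Subgroup.closure (autOrbit G t)).topologicalClosure ≤ S :=
    Subgroup.topologicalClosure_minimal _ ((Subgroup.closure_le S).2 key) hSclosed
  have hall : ∀ g : G, ∀ x : X, g • x = x := fun g x =>
    hle (ht ▸ Subgroup.mem_top g) x
  obtain ⟨x, y, hxy⟩ := hnontriv
  have hd := hmin x
  rw [show (fun g : G => g • x) = fun _ => x from funext fun g => hall g x,
    Set.range_const] at hd
  have : y ∈ closure ({x} : Set X) := hd.closure_eq ▸ Set.mem_univ y
  rw [closure_singleton] at this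
  exact hxy (this.symm ▸ rfl)
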